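/- Variance of the Rademacher (Hutchinson) trace estimator: if u ∈ ℝ^n has i.i.d. entries taking values ±1 each with probability 1/2 and A is a symmetric real n×n matrix, then Var(uᵀ A u) = 2(‖A‖_F² - Σ_j A_{jj}²). -/

import Mathlib

open MeasureTheory ProbabilityTheory Matrix

lemma rad_ae {Ω : Type*} [MeasurableSpace Ω] (μ : Measure Ω) [IsProbabilityMeasure μ]
    (X : Ω → ℝ) (hm : Measurable X) (hp : μ {ω | X ω = 1} = 1/2)
    (hq : μ {ω | X ω = -1} = 1/2) : ∀ᵐ ω ∂μ, X ω = 1 ∨ X ω = -1 := by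
  have hs : MeasurableSet {ω | X ω = 1} := hm (measurableSet_singleton 1)
  have ht : MeasurableSet {ω | X ω = -1} := hm (measurableSet_singleton (-1))
  have hd : Disjoint {ω | X ω = 1} {ω | X ω = -1} := by
    rw [Set.disjoint_left]; rintro ω h1 h2; simp only [Set.mem_setOf_eq] at h1 h2
    norm_num [h1] at h2
  have hu : μ ({ω | X ω = 1} ∪ {ω | X ω = -1}) = 1 := by
    rw [measure_union hd ht, hp, hq]; norm_num [ENNReal.inv_two_add_inv_two]
  have hc : μ ({ω | X ω = 1} ∪ {ω | X ω = -1})ᶜ = 0 := by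
    rw [prob_compl_eq_zero_iff (hs.union ht)]; exact hu
  filter_upwards [MeasureTheory.measure_eq_zero_iff_ae_notMem.mp hc] with ω hω
  simpa [Set.mem_union] using not_not.mp (by simpa using hω)

lemma rad_int {Ω : Type*} [MeasurableSpace Ω] (μ : Measure Ω) [IsProbabilityMeasure μ]
    (X : Ω → ℝ) (hm : Measurable X) (hp : μ {ω | X ω = 1} = 1/2)
    (hq : μ {ω | X ω = -1} = 1/2)
    (hae : ∀ᵐ ω ∂μ, X ω = 1 ∨ X ω = -1) : ∫ ω, X ω ∂μ = 0 := by
  have hs : MeasurableSet {ω | X ω = 1} := hm (measurableSet_singleton 1)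
  have ht : MeasurableSet {ω | X ω = -1} := hm (measurableSet_singleton (-1))
  have heq : X =ᵐ[μ] fun ω => Set.indicator {ω | X ω = 1} (fun _ => (1:ℝ)) ω
      + Set.indicator {ω | X ω = -1} (fun _ => (-1:ℝ)) ω := by
    filter_upwards [hae] with ω hω
    rcases hω with h | h <;> simp [Set.indicator_apply, Set.mem_setOf_eq, h] <;> norm_num
  have hi1 : Integrable (Set.indicator {ω | X ω = 1} (fun _ => (1:ℝ))) μ :=
    (integrable_indicator_iff hs).mpr (integrableOn_const (measure_ne_top μ _))
  have hi2 : Integrable (Set.indicator {ω | X ω = -1} (fun _ => (-1:ℝ))) μ :=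
    (integrable_indicator_iff ht).mpr (integrableOn_const (measure_ne_top μ _))
  rw [integral_congr_ae heq, integral_add hi1 hi2, integral_indicator_const _ hs,
    integral_indicator_const _ ht, measureReal_def, measureReal_def, hp, hq]
  norm_num [ENNReal.toReal_div]

lemma rad_pow {Ω : Type*} [MeasurableSpace Ω] (μ : Measure Ω) [IsProbabilityMeasure μ]
    (X : Ω → ℝ) (hm : Measurable X) (hp : μ {ω | X ω = 1} = 1/2)
    (hq : μ {ω | X ω = -1} = 1/2)
    (hae : ∀ᵐ ω ∂μ, X ω = 1 ∨ X ω = -1) (c : ℕ) :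
    ∫ ω, (X ω) ^ c ∂μ = if Even c then 1 else 0 := by
  by_cases hc : Even c
  · have h : (fun ω => (X ω) ^ c) =ᵐ[μ] fun _ => (1:ℝ) := by
      filter_upwards [hae] with ω hω
      rcases hω with h | h <;> simp [h, hc.neg_one_pow]
    rw [integral_congr_ae h]; simp [hc]
  · have h : (fun ω => (X ω) ^ c) =ᵐ[μ] X := by
      filter_upwards [hae] with ω hω
      rcases hω with h | h <;> simp [h, (Nat.not_even_iff_odd.mp hc).neg_one_pow]
    rw [integral_congr_ae h, rad_int μ X hm hp hq hae]; simp [hc]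

lemma prod_int {n : ℕ} {Ω : Type*} [MeasurableSpace Ω] (μ : Measure Ω) [IsProbabilityMeasure μ]
    (u : Ω → Fin n → ℝ)
    (hmeas : ∀ i, Measurable (fun ω => u ω i))
    (hindep : iIndepFun (fun i ω => u ω i) μ)
    (hae : ∀ᵐ ω ∂μ, ∀ i, u ω i = 1 ∨ u ω i = -1) (c : Fin n → ℕ) (s : Finset (Fin n)) :
    Integrable (fun ω => ∏ i ∈ s, (u ω i) ^ (c i)) μ ∧
      ∫ ω, ∏ i ∈ s, (u ω i) ^ (c i) ∂μ = ∏ i ∈ s, ∫ ω, (u ω i) ^ (c i) ∂μ := by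
  have hind2 : iIndepFun (fun i ω => (u ω i) ^ (c i)) μ :=
    hindep.comp (fun i (x : ℝ) => x ^ (c i)) (fun i => measurable_id.pow_const (c i))
  have hmeas2 : ∀ i, Measurable (fun ω => (u ω i) ^ (c i)) :=
    fun i => (hmeas i).pow_const (c i)
  have hbd : ∀ (t : Finset (Fin n)), ∀ᵐ ω ∂μ, ‖∏ i ∈ t, (u ω i) ^ (c i)‖ ≤ 1 := by
    intro t
    filter_upwards [hae] with ω hω
    rw [Real.norm_eq_abs, Finset.abs_prod]
    calc ∏ i ∈ t, |u ω i ^ c i| ≤ ∏ i ∈ t, 1 := by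
          apply Finset.prod_le_prod (fun i _ => abs_nonneg _)
          intro i _
          rcases hω i with h | h <;> simp [abs_pow, h]
      _ = 1 := by simp
  have hint : ∀ (t : Finset (Fin n)), Integrable (fun ω => ∏ i ∈ t, (u ω i) ^ (c i)) μ := by
    intro t
    refine memLp_one_iff_integrable.mp (MemLp.of_bound ?_ 1 (hbd t))
    exact (Finset.measurable_prod t fun i _ => hmeas2 i).aestronglyMeasurable
  refine ⟨hint s, ?_⟩
  induction s using Finset.induction_on with
  | empty => simp
  | @insert a t hat ih =>
    have hindp : IndepFun (fun ω => ∏ i ∈ t, (u ω i) ^ (c i)) (fun ω => (u ω a) ^ (c a)) μ := by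
      have h := hind2.indepFun_finsetProd_of_notMem hmeas2 hat
      convert h using 1
      ext ω
      simp
    have hia : Integrable (fun ω => (u ω a) ^ (c a)) μ := by
      have := hint {a}; simpa using this
    have hmul := hindp.integral_fun_mul_eq_mul_integral (hint t).aestronglyMeasurable hia.aestronglyMeasurable
    calc ∫ ω, ∏ i ∈ insert a t, (u ω i) ^ (c i) ∂μ
        = ∫ ω, (∏ i ∈ t, (u ω i) ^ (c i)) * (u ω a) ^ (c a) ∂μ := by
          congr 1; ext ω; rw [Finset.prod_insert hat]; ring
      _ = (∫ ω, ∏ i ∈ t, (u ω i) ^ (c i) ∂μ) * ∫ ω, (u ω a) ^ (c a) ∂μ := hmul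
      _ = ∏ i ∈ insert a t, ∫ ω, (u ω i) ^ (c i) ∂μ := by
          rw [ih, Finset.prod_insert hat]; ring

lemma even_count_iff4 {α : Type*} [DecidableEq α] (j k l m : α) :
    (∀ i : α, Even ((if i = j then 1 else 0) + (if i = k then 1 else 0)
      + (if i = l then 1 else 0) + (if i = m then 1 else 0) : ℕ))
    ↔ (j = k ∧ l = m) ∨ (j = l ∧ k = m) ∨ (j = m ∧ k = l) := by
  constructor
  · intro h
    have hj := h j; have hk := h k; have hl := h l; have hm := h m
    by_cases hjk : j = k <;> by_cases hjl : j = l <;> by_cases hjm : j = m <;>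
      by_cases hkl : k = l <;> by_cases hkm : k = m <;> by_cases hlm : l = m <;>
      simp_all [Nat.even_iff] <;> omega
  · rintro (⟨h1, h2⟩ | ⟨h1, h2⟩ | ⟨h1, h2⟩) i <;> subst h1 <;> subst h2 <;>
      split_ifs <;> simp_all <;> decide

lemma even_count_iff2 {α : Type*} [DecidableEq α] (j k : α) :
    (∀ i : α, Even ((if i = j then 1 else 0) + (if i = k then 1 else 0) : ℕ)) ↔ j = k := by
  constructor
  · intro h
    have hj := h j
    by_cases hjk : j = k <;> simp_all [Nat.even_iff]
  · rintro rfl i; split_ifs <;> decide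

lemma ite_decomp4 {α : Type*} [DecidableEq α] (j k l m : α) :
    (if (j = k ∧ l = m) ∨ (j = l ∧ k = m) ∨ (j = m ∧ k = l) then (1:ℝ) else 0)
    = (if j = k then (1:ℝ) else 0) * (if l = m then 1 else 0)
      + (if j = l then (1:ℝ) else 0) * (if k = m then 1 else 0)
      + (if j = m then (1:ℝ) else 0) * (if k = l then 1 else 0)
      - 2 * ((if j = k then (1:ℝ) else 0) * (if k = l then 1 else 0)
          * (if l = m then 1 else 0)) := by
  by_cases hjk : j = k <;> by_cases hjl : j = l <;> by_cases hjm : j = m <;>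
    by_cases hkl : k = l <;> by_cases hkm : k = m <;> by_cases hlm : l = m <;>
    simp_all <;> norm_num

lemma prod_pow_count4 {n : ℕ} (v : Fin n → ℝ) (j k l m : Fin n) :
    ∏ i, v i ^ ((if i = j then 1 else 0) + (if i = k then 1 else 0)
      + (if i = l then 1 else 0) + (if i = m then 1 else 0) : ℕ)
    = v j * v k * v l * v m := by
  have h1 : ∀ b : Fin n, ∏ i, v i ^ (if i = b then 1 else 0 : ℕ) = v b := by
    intro b; simp [pow_ite, Finset.prod_ite_eq']
  calc ∏ i, v i ^ ((if i = j then 1 else 0) + (if i = k then 1 else 0)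
        + (if i = l then 1 else 0) + (if i = m then 1 else 0) : ℕ)
      = ∏ i, (v i ^ (if i = j then 1 else 0 : ℕ) * v i ^ (if i = k then 1 else 0 : ℕ)
        * v i ^ (if i = l then 1 else 0 : ℕ) * v i ^ (if i = m then 1 else 0 : ℕ)) := by
        apply Finset.prod_congr rfl; intro i _; rw [← pow_add, ← pow_add, ← pow_add]
    _ = v j * v k * v l * v m := by
        rw [Finset.prod_mul_distrib, Finset.prod_mul_distrib, Finset.prod_mul_distrib,
          h1, h1, h1, h1]

lemma prod_pow_count2 {n : ℕ} (v : Fin n → ℝ) (j k : Fin n) :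
    ∏ i, v i ^ ((if i = j then 1 else 0) + (if i = k then 1 else 0) : ℕ) = v j * v k := by
  have h1 : ∀ b : Fin n, ∏ i, v i ^ (if i = b then 1 else 0 : ℕ) = v b := by
    intro b; simp [pow_ite, Finset.prod_ite_eq']
  calc ∏ i, v i ^ ((if i = j then 1 else 0) + (if i = k then 1 else 0) : ℕ)
      = ∏ i, (v i ^ (if i = j then 1 else 0 : ℕ) * v i ^ (if i = k then 1 else 0 : ℕ)) := by
        apply Finset.prod_congr rfl; intro i _; rw [← pow_add]
    _ = v j * v k := by rw [Finset.prod_mul_distrib, h1, h1]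

lemma quad_sum_eval {n : ℕ} (A : Matrix (Fin n) (Fin n) ℝ) (hA : ∀ j l, A l j = A j l) :
    ∑ j, ∑ l, ∑ k, ∑ m, A j k * A l m *
        (if (j = k ∧ l = m) ∨ (j = l ∧ k = m) ∨ (j = m ∧ k = l) then (1:ℝ) else 0)
    = (∑ j, A j j) ^ 2 + 2 * ((∑ j, ∑ k, (A j k) ^ 2) - ∑ j, (A j j) ^ 2) := by
  have step : ∀ j l k m : Fin n, A j k * A l m *
        (if (j = k ∧ l = m) ∨ (j = l ∧ k = m) ∨ (j = m ∧ k = l) then (1:ℝ) else 0)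
      = A j k * A l m * ((if j = k then (1:ℝ) else 0) * (if l = m then 1 else 0))
      + A j k * A l m * ((if j = l then (1:ℝ) else 0) * (if k = m then 1 else 0))
      + A j k * A l m * ((if j = m then (1:ℝ) else 0) * (if k = l then 1 else 0))
      - A j k * A l m * (2 * ((if j = k then (1:ℝ) else 0) * (if k = l then 1 else 0)
          * (if l = m then 1 else 0))) := by
    intro j l k m; rw [ite_decomp4]; ring
  simp only [step, Finset.sum_add_distrib, Finset.sum_sub_distrib]
  have T1 : ∑ j : Fin n, ∑ l : Fin n, ∑ k : Fin n, ∑ m : Fin n,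
      A j k * A l m * ((if j = k then (1:ℝ) else 0) * (if l = m then 1 else 0))
      = (∑ j, A j j) ^ 2 := by
    simp [mul_ite, ite_mul, Finset.sum_ite_eq, Finset.sum_ite_eq', ← Finset.sum_mul_sum, sq]
  have T2 : ∑ j : Fin n, ∑ l : Fin n, ∑ k : Fin n, ∑ m : Fin n,
      A j k * A l m * ((if j = l then (1:ℝ) else 0) * (if k = m then 1 else 0))
      = ∑ j, ∑ k, (A j k) ^ 2 := by
    simp [mul_ite, ite_mul, Finset.sum_ite_eq, Finset.sum_ite_eq', sq]
  have T3 : ∑ j : Fin n, ∑ l : Fin n, ∑ k : Fin n, ∑ m : Fin n,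
      A j k * A l m * ((if j = m then (1:ℝ) else 0) * (if k = l then 1 else 0))
      = ∑ j, ∑ k, (A j k) ^ 2 := by
    have h : ∀ j l : Fin n, ∑ k : Fin n, ∑ m : Fin n,
        A j k * A l m * ((if j = m then (1:ℝ) else 0) * (if k = l then 1 else 0))
        = A j l * A l j := by
      intro j l
      simp [mul_ite, ite_mul, Finset.sum_ite_eq, Finset.sum_ite_eq']
    simp only [h]
    apply Finset.sum_congr rfl; intro j _
    apply Finset.sum_congr rfl; intro l _
    rw [hA j l]; ring
  have T4 : ∑ j : Fin n, ∑ l : Fin n, ∑ k : Fin n, ∑ m : Fin n,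
      A j k * A l m * (2 * ((if j = k then (1:ℝ) else 0) * (if k = l then 1 else 0)
        * (if l = m then 1 else 0)))
      = 2 * ∑ j, (A j j) ^ 2 := by
    have h : ∀ j l : Fin n, ∑ k : Fin n, ∑ m : Fin n,
        A j k * A l m * (2 * ((if j = k then (1:ℝ) else 0) * (if k = l then 1 else 0)
          * (if l = m then 1 else 0)))
        = (if j = l then (1:ℝ) else 0) * (A j j * A l l * 2) := by
      intro j l
      simp [mul_ite, ite_mul, Finset.sum_ite_eq, Finset.sum_ite_eq']
      split_ifs with hh
      · subst hh; ring
      · rfl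
    simp only [h]
    simp [Finset.sum_ite_eq, Finset.mul_sum, sq, ite_mul]
    apply Finset.sum_congr rfl; intro j _
    ring
  rw [T1, T2, T3, T4]; ring

/-- Variance of the Hutchinson trace estimator with i.i.d. Rademacher probe
vector: `Var(uᵀ A u) = 2 (‖A‖_F² − Σ_j A_{jj}²)` for symmetric `A`. -/
theorem hutchinson_rademacher_variance
    {n : ℕ} {Ω : Type*} [MeasurableSpace Ω] (μ : Measure Ω) [IsProbabilityMeasure μ]
    (u : Ω → Fin n → ℝ) (A : Matrix (Fin n) (Fin n) ℝ) (hA : A.IsSymm)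
    (hmeas : ∀ i, Measurable (fun ω => u ω i))
    (hindep : iIndepFun (fun i ω => u ω i) μ)
    (hplus : ∀ i, μ {ω | u ω i = 1} = 1/2)
    (hminus : ∀ i, μ {ω | u ω i = -1} = 1/2) :
    variance (fun ω => dotProduct (u ω) (A.mulVec (u ω))) μ
      = 2 * ((∑ j, ∑ l, (A j l) ^ 2) - ∑ j, (A j j) ^ 2) := by
  classical
  set X : Ω → ℝ := fun ω => dotProduct (u ω) (A.mulVec (u ω)) with hXdef
  have hae : ∀ᵐ ω ∂μ, ∀ i, u ω i = 1 ∨ u ω i = -1 := by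
    rw [MeasureTheory.ae_all_iff]
    exact fun i => rad_ae μ _ (hmeas i) (hplus i) (hminus i)
  have hpow : ∀ i c, ∫ ω, (u ω i) ^ c ∂μ = if Even c then 1 else 0 := fun i c =>
    rad_pow μ _ (hmeas i) (hplus i) (hminus i)
      (rad_ae μ _ (hmeas i) (hplus i) (hminus i)) c
  -- pair moments
  have hpair : ∀ j k : Fin n, Integrable (fun ω => u ω j * u ω k) μ ∧
      ∫ ω, u ω j * u ω k ∂μ = if j = k then 1 else 0 := by
    intro j k
    set c : Fin n → ℕ := fun i => (if i = j then 1 else 0) + (if i = k then 1 else 0) with hc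
    have hfe : (fun ω => ∏ i, (u ω i) ^ (c i)) = fun ω => u ω j * u ω k := by
      funext ω; exact prod_pow_count2 (u ω) j k
    have hpi := prod_int μ u hmeas hindep hae c Finset.univ
    refine ⟨hfe ▸ hpi.1, ?_⟩
    rw [← hfe]
    rw [hpi.2]
    simp only [hpow]
    rw [Finset.prod_boole]
    simp only [Finset.mem_univ, true_implies]
    rw [if_congr (even_count_iff2 j k) rfl rfl]
  -- quadruple moments
  have hquad : ∀ j k l m : Fin n, Integrable (fun ω => u ω j * u ω k * (u ω l * u ω m)) μ ∧
      ∫ ω, u ω j * u ω k * (u ω l * u ω m) ∂μ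
        = if (j = k ∧ l = m) ∨ (j = l ∧ k = m) ∨ (j = m ∧ k = l) then 1 else 0 := by
    intro j k l m
    set c : Fin n → ℕ := fun i => (if i = j then 1 else 0) + (if i = k then 1 else 0)
      + (if i = l then 1 else 0) + (if i = m then 1 else 0) with hc
    have hfe : (fun ω => ∏ i, (u ω i) ^ (c i)) = fun ω => u ω j * u ω k * (u ω l * u ω m) := by
      funext ω; rw [prod_pow_count4 (u ω) j k l m]; ring
    have hpi := prod_int μ u hmeas hindep hae c Finset.univ
    refine ⟨hfe ▸ hpi.1, ?_⟩
    rw [← hfe, hpi.2]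
    simp only [hpow]
    rw [Finset.prod_boole]
    simp only [Finset.mem_univ, true_implies]
    rw [if_congr (even_count_iff4 j k l m) rfl rfl]
  -- rewrite X as a double sum
  have hXeq : ∀ ω, X ω = ∑ j, ∑ k, A j k * (u ω j * u ω k) := by
    intro ω
    simp only [hXdef, dotProduct, Matrix.mulVec]
    apply Finset.sum_congr rfl; intro j _
    rw [Finset.mul_sum]
    apply Finset.sum_congr rfl; intro k _
    ring
  have hXmeas : Measurable X := by
    have : Measurable fun ω => ∑ j, ∑ k, A j k * (u ω j * u ω k) := by
      apply Finset.measurable_sum; intro j _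
      apply Finset.measurable_sum; intro k _
      exact (((hmeas j).mul (hmeas k)).const_mul _)
    simpa [funext hXeq] using this
  have hXbd : ∀ᵐ ω ∂μ, ‖X ω‖ ≤ ∑ j, ∑ k, |A j k| := by
    filter_upwards [hae] with ω hω
    rw [Real.norm_eq_abs, hXeq ω]
    calc |∑ j, ∑ k, A j k * (u ω j * u ω k)| ≤ ∑ j, |∑ k, A j k * (u ω j * u ω k)| :=
          Finset.abs_sum_le_sum_abs _ _
      _ ≤ ∑ j, ∑ k, |A j k * (u ω j * u ω k)| := by
          apply Finset.sum_le_sum; intro j _; exact Finset.abs_sum_le_sum_abs _ _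
      _ ≤ ∑ j, ∑ k, |A j k| := by
          apply Finset.sum_le_sum; intro j _
          apply Finset.sum_le_sum; intro k _
          rw [abs_mul]
          have h1 : |u ω j * u ω k| = 1 := by
            rcases hω j with h | h <;> rcases hω k with h' | h' <;> simp [h, h', abs_mul]
          rw [h1, mul_one]
  have hX2 : MemLp X 2 μ :=
    MemLp.of_bound hXmeas.aestronglyMeasurable _ hXbd
  -- expectation of X
  have hEX : ∫ ω, X ω ∂μ = ∑ j, A j j := by
    have h1 : ∫ ω, X ω ∂μ = ∑ j, ∑ k, A j k * ∫ ω, u ω j * u ω k ∂μ := by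
      rw [integral_congr_ae (Filter.EventuallyEq.of_eq (funext hXeq))]
      rw [integral_finset_sum (f := fun j ω => ∑ k, A j k * (u ω j * u ω k)) _ fun j _ => integrable_finset_sum _
        fun k _ => ((hpair j k).1.const_mul _)]
      apply Finset.sum_congr rfl; intro j _
      rw [integral_finset_sum (f := fun k ω => A j k * (u ω j * u ω k)) _ fun k _ => ((hpair j k).1.const_mul _)]
      exact Finset.sum_congr rfl fun k _ => integral_const_mul _ _
    rw [h1]
    simp [fun j k => (hpair j k).2, mul_ite, Finset.sum_ite_eq]
  -- expectation of X²
  have hX2eq : ∀ ω, X ω ^ 2 = ∑ j, ∑ l, ∑ k, ∑ m,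
      A j k * A l m * (u ω j * u ω k * (u ω l * u ω m)) := by
    intro ω
    rw [hXeq ω, sq, Finset.sum_mul_sum]
    apply Finset.sum_congr rfl; intro j _
    apply Finset.sum_congr rfl; intro l _
    rw [Finset.sum_mul_sum]
    apply Finset.sum_congr rfl; intro k _
    apply Finset.sum_congr rfl; intro m _
    ring
  have hEX2 : ∫ ω, X ω ^ 2 ∂μ
      = (∑ j, A j j) ^ 2 + 2 * ((∑ j, ∑ k, (A j k) ^ 2) - ∑ j, (A j j) ^ 2) := by
    have h1 : ∫ ω, X ω ^ 2 ∂μ = ∑ j, ∑ l, ∑ k, ∑ m,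
        A j k * A l m * ∫ ω, u ω j * u ω k * (u ω l * u ω m) ∂μ := by
      rw [integral_congr_ae (Filter.EventuallyEq.of_eq (funext hX2eq))]
      rw [integral_finset_sum (f := fun j ω => ∑ l, ∑ k, ∑ m, A j k * A l m * (u ω j * u ω k * (u ω l * u ω m))) _ fun j _ => integrable_finset_sum _
        fun l _ => integrable_finset_sum _ fun k _ => integrable_finset_sum _
        fun m _ => ((hquad j k l m).1.const_mul _)]
      apply Finset.sum_congr rfl; intro j _
      rw [integral_finset_sum (f := fun l ω => ∑ k, ∑ m, A j k * A l m * (u ω j * u ω k * (u ω l * u ω m))) _ fun l _ => integrable_finset_sum _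
        fun k _ => integrable_finset_sum _ fun m _ => ((hquad j k l m).1.const_mul _)]
      apply Finset.sum_congr rfl; intro l _
      rw [integral_finset_sum (f := fun k ω => ∑ m, A j k * A l m * (u ω j * u ω k * (u ω l * u ω m))) _ fun k _ => integrable_finset_sum _
        fun m _ => ((hquad j k l m).1.const_mul _)]
      apply Finset.sum_congr rfl; intro k _
      rw [integral_finset_sum (f := fun m ω => A j k * A l m * (u ω j * u ω k * (u ω l * u ω m))) _ fun m _ => ((hquad j k l m).1.const_mul _)]
      exact Finset.sum_congr rfl fun m _ => integral_const_mul _ _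
    rw [h1]
    have h2 : ∀ j l k m : Fin n, A j k * A l m * ∫ ω, u ω j * u ω k * (u ω l * u ω m) ∂μ
        = A j k * A l m *
          (if (j = k ∧ l = m) ∨ (j = l ∧ k = m) ∨ (j = m ∧ k = l) then (1:ℝ) else 0) := by
      intro j l k m; rw [(hquad j k l m).2]
    simp only [h2]
    exact quad_sum_eval A (fun j l => hA.apply j l)
  -- conclude
  have hvar := variance_eq_sub hX2
  have hμX2 : μ[X ^ 2] = ∫ ω, X ω ^ 2 ∂μ := by
    apply integral_congr_ae; filter_upwards with ω; simp
  rw [hvar, hμX2, hEX2]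
  rw [show μ[X] = ∫ ω, X ω ∂μ from rfl, hEX]
  ring
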